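/- Let q be an odd prime power with a ∈ F_q satisfying a² = 3, let b = 2⁻¹, and let M₂ = [[b, −ab], [ab, b]]. For any vectors m, n ∈ F_q^n, writing d = (m, n) ∈ (F_q^n)², the three points 0, d, and M₂d (with M₂ acting blockwise) form an equilateral triangle: the squared distances ‖d − 0‖², ‖M₂d − 0‖², and ‖M₂d − d‖² are all equal to m·m + n·n, where x·y denotes the standard bilinear form ∑ᵢ xᵢyᵢ on F_q^n. -/

import Mathlib

/-- Standard bilinear form on `F^n`. -/
def dotF {F : Type*} [Field F] {n : ℕ} (x y : Fin n → F) : F := ∑ i, x i * y i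

theorem stmt8 {q N : ℕ} (hq : Odd q) (hpp : IsPrimePow q)
    (F : Type*) [Field F] [Fintype F] (hcard : Fintype.card F = q)
    (a : F) (ha : a ^ 2 = 3) (b : F) (hb : b = 2⁻¹)
    (m n : Fin N → F) :
    -- the three points are 0, d = (m, n), and M₂ d = (b•m − ab•n, ab•m + b•n)
    (dotF m m + dotF n n = dotF m m + dotF n n) ∧
    (dotF (b • m - (a * b) • n) (b • m - (a * b) • n)
        + dotF ((a * b) • m + b • n) ((a * b) • m + b • n) = dotF m m + dotF n n) ∧
    (dotF (b • m - (a * b) • n - m) (b • m - (a * b) • n - m)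
        + dotF ((a * b) • m + b • n - n) ((a * b) • m + b • n - n)
      = dotF m m + dotF n n) := by
  have h2 : (2 : F) ≠ 0 := by
    intro h
    have hchar : ringChar F = 2 :=
      CharP.ringChar_of_prime_eq_zero Nat.prime_two h
    obtain ⟨k, hk⟩ := FiniteField.card F (ringChar F)
      |>.imp (fun k hk => hk)
    rw [hchar] at hk
    have : Even q := by
      rw [← hcard, hk.2]
      exact (Nat.even_pow).mpr ⟨even_two, k.2.ne'⟩
    exact ((Nat.not_even_iff_odd.mpr hq)) this
  have hb2 : 2 * b - 1 = 0 := by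
    rw [hb]; field_simp; ring
  have ha3 : a ^ 2 - 3 = 0 := by rw [ha]; ring
  refine ⟨rfl, ?_, ?_⟩
  · simp only [dotF, Pi.smul_apply, Pi.sub_apply, Pi.add_apply, smul_eq_mul,
      ← Finset.sum_add_distrib]
    refine Finset.sum_congr rfl fun i _ => ?_
    linear_combination (b ^ 2 * (m i * m i + n i * n i)) * ha3 +
      ((2 * b + 1) * (m i * m i + n i * n i)) * hb2
  · simp only [dotF, Pi.smul_apply, Pi.sub_apply, Pi.add_apply, smul_eq_mul,
      ← Finset.sum_add_distrib]
    refine Finset.sum_congr rfl fun i _ => ?_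
    linear_combination (b ^ 2 * (m i * m i + n i * n i)) * ha3 +
      (2 * b * (m i * m i + n i * n i)) * hb2
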